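/- For the Bernoulli claim distribution with h_0 = q, h_1 = p = 1 - q, 0 < p < 1 and all other h_k = 0, the recurrence sequence satisfies x_n = (1 + (-1)^n q^{1-n})/(1+q) for all n \geq 0, and consequently D_n = h_0 (x_n x_{n+2} - x_{n+1}^2) = (-1)^n q^{-n}; in particular D_{2n} = q^{-2n} \geq 1 is nondecreasing and D_{2n+1} = -q^{-2n-1} \leq -1 is nonincreasing. -/

import Mathlib

theorem stmt_17 (p q : ℝ) (hp : 0 < p) (hp1 : p < 1) (hq : q = 1 - p)
    (h : ℕ → ℝ) (hh0 : h 0 = q) (hh1 : h 1 = p) (hhk : ∀ k, 2 ≤ k → h k = 0)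
    (x : ℕ → ℝ) (hx0 : x 0 = 1) (hx1 : x 1 = 0)
    (hrec : ∀ n, 2 ≤ n →
      x n = (1 / h 0) * (x (n - 2) - ∑ i ∈ Finset.Icc 1 (n - 1), h (n - i) * x i))
    (D : ℕ → ℝ) (hD : ∀ n, D n = h 0 * (x n * x (n + 2) - (x (n + 1)) ^ 2)) :
    (∀ n : ℕ, x n = (1 + (-1 : ℝ) ^ n * q ^ ((1 : ℤ) - n)) / (1 + q)) ∧
    (∀ n : ℕ, D n = (-1 : ℝ) ^ n * q ^ (-(n : ℤ))) ∧
    (∀ n : ℕ, 1 ≤ D (2 * n) ∧ D (2 * n) ≤ D (2 * n + 2) ∧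
      D (2 * n + 1) ≤ -1 ∧ D (2 * n + 3) ≤ D (2 * n + 1)) := by
  have hq0 : 0 < q := by rw [hq]; linarith
  have hq1 : q < 1 := by rw [hq]; linarith
  have hqne : q ≠ 0 := ne_of_gt hq0
  have h1q : (1 : ℝ) + q ≠ 0 := by positivity
  have hp' : p = 1 - q := by rw [hq]; ring
  -- simplified recurrence
  have hrec' : ∀ k : ℕ, x (k + 2) = (1 / q) * (x k - p * x (k + 1)) := by
    intro k
    have hr := hrec (k + 2) (by omega)
    have e1 : k + 2 - 2 = k := by omega
    have e2 : k + 2 - 1 = k + 1 := by omega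
    rw [e1, e2] at hr
    have hsum : ∑ i ∈ Finset.Icc 1 (k + 1), h (k + 2 - i) * x i = p * x (k + 1) := by
      rw [Finset.sum_eq_single (k + 1)]
      · have : k + 2 - (k + 1) = 1 := by omega
        rw [this, hh1]
      · intro i hi hne
        have hi' := Finset.mem_Icc.mp hi
        have h2 : 2 ≤ k + 2 - i := by omega
        rw [hhk _ h2, zero_mul]
      · intro hmem
        exact absurd (Finset.mem_Icc.mpr ⟨by omega, le_refl _⟩) hmem
    rw [hr, hh0, hsum]
  -- closed form for x
  have key : ∀ n : ℕ, x n = (1 + (-1 : ℝ) ^ n * q ^ ((1 : ℤ) - n)) / (1 + q) ∧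
      x (n + 1) = (1 + (-1 : ℝ) ^ (n + 1) * q ^ ((1 : ℤ) - (n + 1 : ℕ))) / (1 + q) := by
    intro n
    induction n with
    | zero =>
      constructor
      · rw [hx0]; norm_num [div_self h1q]
      · rw [hx1]; norm_num
    | succ k ih =>
      refine ⟨ih.2, ?_⟩
      rw [hrec' k, ih.1, ih.2, hp']
      push_cast
      have ea : q ^ ((1 : ℤ) - (k : ℤ)) = q * q ^ (-(k : ℤ)) := by
        rw [sub_eq_add_neg, zpow_add₀ hqne, zpow_one]
      have eb : q ^ ((1 : ℤ) - ((k : ℤ) + 1)) = q ^ (-(k : ℤ)) := by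
        norm_num
      have ec : q ^ ((1 : ℤ) - ((k : ℤ) + 1 + 1)) = q ^ (-(k : ℤ)) * q⁻¹ := by
        rw [show (1 : ℤ) - ((k : ℤ) + 1 + 1) = -(k : ℤ) + (-1) by ring,
          zpow_add₀ hqne, zpow_neg_one]
      rw [ea, eb, ec]
      field_simp
      ring
  have hx : ∀ n : ℕ, x n = (1 + (-1 : ℝ) ^ n * q ^ ((1 : ℤ) - n)) / (1 + q) :=
    fun n => (key n).1
  -- value of D
  have hDval : ∀ n : ℕ, D n = (-1 : ℝ) ^ n * q ^ (-(n : ℤ)) := by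
    intro n
    rw [hD, hh0, hx n, hx (n + 1), hx (n + 2)]
    push_cast
    have ea : q ^ ((1 : ℤ) - (n : ℤ)) = q * q ^ (-(n : ℤ)) := by
      rw [sub_eq_add_neg, zpow_add₀ hqne, zpow_one]
    have eb : q ^ ((1 : ℤ) - ((n : ℤ) + 1)) = q ^ (-(n : ℤ)) := by
      norm_num
    have ec : q ^ ((1 : ℤ) - ((n : ℤ) + 2)) = q ^ (-(n : ℤ)) * q⁻¹ := by
      rw [show (1 : ℤ) - ((n : ℤ) + 2) = -(n : ℤ) + (-1) by ring,
        zpow_add₀ hqne, zpow_neg_one]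
    rw [ea, eb, ec]
    have h2 : (-1 : ℝ) ^ (n + 1) = -(-1 : ℝ) ^ n := by rw [pow_succ]; ring
    have h3 : (-1 : ℝ) ^ (n + 2) = (-1 : ℝ) ^ n := by rw [pow_add]; norm_num
    rw [h2, h3]
    field_simp
    ring
  -- rewrite D at even/odd points
  have hDe : ∀ m : ℕ, Even m → D m = (q ^ m)⁻¹ := by
    intro m hm
    rw [hDval m, hm.neg_one_pow, one_mul, zpow_neg, zpow_natCast]
  have hDo : ∀ m : ℕ, Odd m → D m = -(q ^ m)⁻¹ := by
    intro m hm
    rw [hDval m, hm.neg_one_pow, zpow_neg, zpow_natCast]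
    ring
  have hpowpos : ∀ m : ℕ, 0 < q ^ m := fun m => pow_pos hq0 m
  have hpowle : ∀ m : ℕ, q ^ m ≤ 1 := fun m => pow_le_one₀ hq0.le hq1.le
  have hmono : ∀ a b : ℕ, a ≤ b → q ^ b ≤ q ^ a := fun a b hab =>
    pow_le_pow_of_le_one hq0.le hq1.le hab
  refine ⟨hx, hDval, fun n => ?_⟩
  have e0 := hDe (2 * n) (even_two_mul n)
  have e2 := hDe (2 * n + 2) ⟨n + 1, by ring⟩
  have o1 := hDo (2 * n + 1) ⟨n, by ring⟩
  have o3 := hDo (2 * n + 3) ⟨n + 1, by ring⟩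
  refine ⟨?_, ?_, ?_, ?_⟩
  · rw [e0]
    exact (one_le_inv₀ (hpowpos _)).2 (hpowle _)
  · rw [e0, e2]
    exact inv_anti₀ (hpowpos _) (hmono _ _ (by omega))
  · rw [o1]
    have := (one_le_inv₀ (hpowpos (2 * n + 1))).2 (hpowle (2 * n + 1))
    linarith
  · rw [o1, o3]
    have := inv_anti₀ (hpowpos (2 * n + 3)) (hmono _ _ (show 2 * n + 1 ≤ 2 * n + 3 by omega))
    linarith
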